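/- arXiv:2005.09447 — 2 statements merged into one kernel-verified Lean document; each statement's English description precedes it below -/
import Mathlib

section
/- Let G be a connected {house, hole}-free graph with no universal line. Then no line generated by an edge equals a line generated by a good pair; i.e., the set L1 of lines generated by edges and the set L2 of lines generated by good pairs are disjoint. -/
open SimpleGraph

variable {V : Type*}

/-- The interval between two vertices: vertices on some shortest path. -/
def interval (G : SimpleGraph V) (x y : V) : Set V :=
  {z | G.dist x y = G.dist x z + G.dist z y}

/-- The line generated by two vertices. -/
def line (G : SimpleGraph V) (x y : V) : Set V :=
  {z | z ∈ interval G x y ∨ x ∈ interval G z y ∨ y ∈ interval G x z}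

/-- The house graph: a 5-cycle 0-1-2-3-4-0 plus the chord 1-4. -/
def house : SimpleGraph (Fin 5) :=
  SimpleGraph.fromEdgeSet {s(0,1), s(1,2), s(2,3), s(3,4), s(4,0), s(1,4)}

/-- A graph is {house, hole}-free if it has no induced house and no induced
cycle of length at least 5. -/
def HHFree (G : SimpleGraph V) : Prop :=
  IsEmpty (house ↪g G) ∧ ∀ n, 5 ≤ n → IsEmpty (cycleGraph n ↪g G)

/-- A graph is hole-free if it has no induced cycle of length at least 5. -/
def HoleFree (G : SimpleGraph V) : Prop :=
  ∀ n, 5 ≤ n → IsEmpty (cycleGraph n ↪g G)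

/-- A good pair: two vertices at distance 2 with a common neighbour `c`
such that `line u c = line c v`. -/
def GoodPair (G : SimpleGraph V) (u v : V) : Prop :=
  G.dist u v = 2 ∧ ∃ c, G.Adj u c ∧ G.Adj c v ∧ line G u c = line G c v

/-- The set of all lines of a graph (generated by pairs of distinct vertices). -/
def lineSet (G : SimpleGraph V) : Set (Set V) :=
  {ℓ | ∃ u v : V, u ≠ v ∧ line G u v = ℓ}

lemma mem_line_iff (G : SimpleGraph V) (x y z : V) :
    z ∈ line G x y ↔ (G.dist x y = G.dist x z + G.dist z y ∨
      G.dist z y = G.dist z x + G.dist x y ∨ G.dist x z = G.dist x y + G.dist y z) := Iff.rfl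

lemma dist_adj_le (G : SimpleGraph V) (hG : G.Connected) {a b : V} (h : G.Adj a b) (z : V) :
    G.dist a z ≤ G.dist b z + 1 := by
  have t := hG.dist_triangle (u := a) (v := b) (w := z)
  have h1 : G.dist a b = 1 := dist_eq_one_iff_adj.2 h
  omega

lemma mem_line_edge (G : SimpleGraph V) (hG : G.Connected) {u v : V} (h : G.Adj u v) (z : V) :
    z ∈ line G u v ↔ G.dist u z ≠ G.dist v z := by
  have huv : G.dist u v = 1 := dist_eq_one_iff_adj.2 h
  have t1 := dist_adj_le G hG h z
  have t2 := dist_adj_le G hG h.symm z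
  rw [mem_line_iff, SimpleGraph.dist_comm (G := G) (u := z) (v := v),
    SimpleGraph.dist_comm (G := G) (u := z) (v := u)]
  constructor
  · rintro (h1 | h2 | h3)
    · rcases Nat.eq_zero_or_pos (G.dist u z) with h0 | h0
      · have hu : u = z := (hG.dist_eq_zero_iff).1 h0
        have : G.dist v z = 1 := by rw [← hu, SimpleGraph.dist_comm (G := G) (u := v) (v := u)]; exact huv
        omega
      · have h0' : G.dist v z = 0 := by omega
        have hv : v = z := (hG.dist_eq_zero_iff).1 h0'
        have : G.dist u z = 1 := by rw [← hv]; exact huv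
        omega
    · omega
    · omega
  · intro hne
    rcases Nat.lt_or_ge (G.dist u z) (G.dist v z) with hlt | hge
    · right; left; omega
    · right; right; omega

lemma mem_line_two (G : SimpleGraph V) (hG : G.Connected) {x y : V} (h : G.dist x y = 2) (z : V) :
    z ∈ line G x y ↔ (G.dist x z = G.dist y z + 2 ∨ G.dist y z = G.dist x z + 2 ∨
      (G.dist x z = 1 ∧ G.dist y z = 1)) := by
  rw [mem_line_iff, SimpleGraph.dist_comm (G := G) (u := z) (v := y),
    SimpleGraph.dist_comm (G := G) (u := z) (v := x), h]
  constructor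
  · rintro (h1 | h2 | h3)
    · rcases Nat.eq_zero_or_pos (G.dist x z) with h0 | h0
      · have hx : x = z := (hG.dist_eq_zero_iff).1 h0
        have : G.dist y z = 2 := by
          rw [← hx, SimpleGraph.dist_comm (G := G) (u := y) (v := x)]; exact h
        omega
      · rcases Nat.eq_zero_or_pos (G.dist y z) with h0' | h0'
        · have hy : y = z := (hG.dist_eq_zero_iff).1 h0'
          have : G.dist x z = 2 := by rw [← hy]; exact h
          omega
        · right; right; omega
    · omega
    · omega
  · rintro (h1 | h2 | h3)
    · right; right; omega
    · right; left; omega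
    · left; omega

lemma dist_adj_le' (G : SimpleGraph V) (hG : G.Connected) {a b : V} (h : G.Adj a b) (z : V) :
    G.dist z b ≤ G.dist z a + 1 := by
  have t := hG.dist_triangle (u := z) (v := a) (w := b)
  have h1 : G.dist a b = 1 := dist_eq_one_iff_adj.2 h
  omega

lemma walk_getVert_dist_le (G : SimpleGraph V) (hG : G.Connected) {u w : V} (P : G.Walk u w) :
    ∀ i, i ≤ P.length → G.dist u (P.getVert i) ≤ i := by
  intro i
  induction i with
  | zero => intro _; rw [P.getVert_zero]; simp
  | succ n ih =>
    intro hn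
    have h1 := ih (by omega)
    have hadj := P.adj_getVert_succ (by omega : n < P.length)
    have h2 := dist_adj_le' G hG hadj u
    omega

lemma walk_getVert_spec (G : SimpleGraph V) (hG : G.Connected) {u w : V} (P : G.Walk u w)
    (hP : P.length = G.dist u w) {i : ℕ} (hi : i ≤ P.length) :
    G.dist u (P.getVert i) = i ∧ G.dist (P.getVert i) w = P.length - i := by
  have h1 := walk_getVert_dist_le G hG P i hi
  have h2 : G.dist w (P.getVert i) ≤ P.length - i := by
    have := walk_getVert_dist_le G hG P.reverse (P.length - i)
      (by rw [Walk.length_reverse]; omega)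
    rwa [Walk.getVert_reverse, show P.length - (P.length - i) = i by omega] at this
  have h2' : G.dist (P.getVert i) w ≤ P.length - i := by
    rwa [SimpleGraph.dist_comm (G := G) (u := P.getVert i) (v := w)]
  have ht := hG.dist_triangle (u := u) (v := P.getVert i) (w := w)
  omega

lemma fin_sub_val_eq_one {n : ℕ} (hn : 2 ≤ n) (a b : Fin n) :
    (a - b).val = 1 ↔ (a.val = b.val + 1 ∨ (b.val = n - 1 ∧ a.val = 0)) := by
  rw [Fin.sub_def]
  have ha := a.isLt; have hb := b.isLt
  simp only
  rcases le_or_gt b.val a.val with h | h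
  · have heq : n - b.val + a.val = (a.val - b.val) + n := by omega
    rw [heq, Nat.add_mod_right, Nat.mod_eq_of_lt (by omega)]
    omega
  · rw [Nat.mod_eq_of_lt (by omega)]; omega

lemma cycle_embed (G : SimpleGraph V) (n : ℕ) (hn : 5 ≤ n) (f : ℕ → V)
    (hinj : ∀ a b, a < n → b < n → f a = f b → a = b)
    (hadj : ∀ a b, a < n → b < n →
      (G.Adj (f a) (f b) ↔ (b = a + 1 ∨ a = b + 1 ∨ (a = 0 ∧ b = n - 1) ∨ (b = 0 ∧ a = n - 1)))) :
    Nonempty (cycleGraph n ↪g G) := by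
  refine ⟨⟨⟨fun i => f i.val, ?_⟩, ?_⟩⟩
  · intro a b hab
    exact Fin.ext (hinj a.val b.val a.isLt b.isLt hab)
  · intro a b
    show G.Adj (f a.val) (f b.val) ↔ (cycleGraph n).Adj a b
    rw [cycleGraph_adj', hadj a.val b.val a.isLt b.isLt,
      fin_sub_val_eq_one (by omega) a b, fin_sub_val_eq_one (by omega) b a]
    have ha := a.isLt; have hb := b.isLt
    omega

lemma house_adj_iff (a b : Fin 5) : house.Adj a b ↔
    ((a,b) = (0,1) ∨ (a,b) = (1,0) ∨ (a,b) = (1,2) ∨ (a,b) = (2,1) ∨ (a,b) = (2,3) ∨ (a,b) = (3,2)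
    ∨ (a,b) = (3,4) ∨ (a,b) = (4,3) ∨ (a,b) = (4,0) ∨ (a,b) = (0,4) ∨ (a,b) = (1,4) ∨ (a,b) = (4,1)) := by
  fin_cases a <;> fin_cases b <;> simp [house, Sym2.eq_iff] <;> decide

lemma house_embed (G : SimpleGraph V) (a0 a1 a2 a3 a4 : V)
    (h01 : G.Adj a0 a1) (h12 : G.Adj a1 a2) (h23 : G.Adj a2 a3) (h34 : G.Adj a3 a4)
    (h40 : G.Adj a4 a0) (h14 : G.Adj a1 a4)
    (n02 : ¬G.Adj a0 a2) (n03 : ¬G.Adj a0 a3) (n13 : ¬G.Adj a1 a3) (n24 : ¬G.Adj a2 a4)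
    (e02 : a0 ≠ a2) (e03 : a0 ≠ a3) (e13 : a1 ≠ a3) (e24 : a2 ≠ a4) :
    Nonempty (house ↪g G) := by
  have e01 := h01.ne
  have e12 := h12.ne
  have e23 := h23.ne
  have e34 := h34.ne
  have e40 := h40.ne
  have e14 := h14.ne
  refine ⟨⟨⟨![a0, a1, a2, a3, a4], ?_⟩, ?_⟩⟩
  · intro a b hab
    fin_cases a <;> fin_cases b <;> simp_all
  · intro a b
    fin_cases a <;> fin_cases b <;> rw [house_adj_iff] <;>
      simp only [Function.Embedding.coeFn_mk, Matrix.cons_val_zero, Matrix.cons_val_one,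
        Matrix.head_cons, Matrix.cons_val_two, Matrix.tail_cons, Matrix.cons_val_three,
        Matrix.cons_val_four] <;>
      first
        | (refine iff_of_true ?_ (by decide); first | exact h01 | exact h01.symm | exact h12 | exact h12.symm | exact h23 | exact h23.symm | exact h34 | exact h34.symm | exact h40 | exact h40.symm | exact h14 | exact h14.symm)
        | (refine iff_of_false ?_ (by decide); first | exact n02 | exact (fun h => n02 h.symm) | exact n03 | exact (fun h => n03 h.symm) | exact n13 | exact (fun h => n13 h.symm) | exact n24 | exact (fun h => n24 h.symm) | exact G.loopless.irrefl _)

lemma exists_common_nbr (G : SimpleGraph V) (hG : G.Connected) (hH : HHFree G)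
    {u v : V} (huv : G.Adj u v) {w0 : V} (hw0 : G.dist u w0 = G.dist v w0) :
    ∃ z, G.Adj u z ∧ G.Adj v z := by
  classical
  suffices H : ∀ k w, G.dist u w = k → G.dist v w = k → ∃ z, G.Adj u z ∧ G.Adj v z by
    exact H _ w0 rfl hw0.symm
  intro k
  induction k using Nat.strong_induction_on with
  | _ k IH =>
  intro w huw hvw
  match k, huw, hvw with
  | 0, huw, hvw =>
    exfalso
    have h1 : u = w := hG.dist_eq_zero_iff.1 huw
    have h2 : v = w := hG.dist_eq_zero_iff.1 hvw
    exact huv.ne (h1.trans h2.symm)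
  | 1, huw, hvw =>
    exact ⟨w, dist_eq_one_iff_adj.1 huw, dist_eq_one_iff_adj.1 hvw⟩
  | (m + 2), huw, hvw =>
  set k := m + 2 with hk
  by_contra hno
  push_neg at hno
  obtain ⟨P, hPlen⟩ := hG.exists_walk_length_eq_dist u w
  obtain ⟨Q, hQlen⟩ := hG.exists_walk_length_eq_dist v w
  rw [huw] at hPlen
  rw [hvw] at hQlen
  set p : ℕ → V := fun i => P.getVert i with hpdef
  set q : ℕ → V := fun i => Q.getVert i with hqdef
  have hp : ∀ i ≤ k, G.dist u (p i) = i ∧ G.dist (p i) w = k - i := by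
    intro i hi
    have := walk_getVert_spec G hG P (by rw [hPlen, huw]) (by omega : i ≤ P.length)
    rwa [hPlen] at this
  have hq : ∀ i ≤ k, G.dist v (q i) = i ∧ G.dist (q i) w = k - i := by
    intro i hi
    have := walk_getVert_spec G hG Q (by rw [hQlen, hvw]) (by omega : i ≤ Q.length)
    rwa [hQlen] at this
  have hp0 : p 0 = u := P.getVert_zero
  have hq0 : q 0 = v := Q.getVert_zero
  have hpk : p k = w := by rw [hpdef]; simpa [hPlen] using P.getVert_length
  have hqk : q k = w := by rw [hqdef]; simpa [hQlen] using Q.getVert_length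
  have hpadj : ∀ i < k, G.Adj (p i) (p (i + 1)) := fun i hi =>
    P.adj_getVert_succ (by omega : i < P.length)
  have hqadj : ∀ i < k, G.Adj (q i) (q (i + 1)) := fun i hi =>
    Q.adj_getVert_succ (by omega : i < Q.length)
  -- distance of v to p i
  have hvp : ∀ i < k, G.dist v (p i) = i + 1 := by
    intro i hi
    have h1 := (hp i (by omega)).1
    have h2 := (hp i (by omega)).2
    have lb := hG.dist_triangle (u := v) (v := p i) (w := w)
    have ub := hG.dist_triangle (u := v) (v := u) (w := p i)
    have hvu : G.dist v u = 1 := dist_eq_one_iff_adj.2 huv.symm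
    by_contra hne
    have heq : G.dist v (p i) = i := by omega
    obtain ⟨z, hz1, hz2⟩ := IH i (by omega) (p i) h1 heq
    exact hno z hz1 hz2
  have huq : ∀ i < k, G.dist u (q i) = i + 1 := by
    intro i hi
    have h1 := (hq i (by omega)).1
    have h2 := (hq i (by omega)).2
    have lb := hG.dist_triangle (u := u) (v := q i) (w := w)
    have ub := hG.dist_triangle (u := u) (v := v) (w := q i)
    have hvu : G.dist u v = 1 := dist_eq_one_iff_adj.2 huv
    by_contra hne
    have heq : G.dist u (q i) = i := by omega
    obtain ⟨z, hz1, hz2⟩ := IH i (by omega) (q i) heq h1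
    exact hno z hz1 hz2
  -- inequality facts
  have hppne : ∀ i ≤ k, ∀ j ≤ k, p i = p j → i = j := by
    intro i hi j hj heq
    have h1 := (hp i hi).1
    have h2 := (hp j hj).1
    rw [heq] at h1; omega
  have hqqne : ∀ i ≤ k, ∀ j ≤ k, q i = q j → i = j := by
    intro i hi j hj heq
    have h1 := (hq i hi).1
    have h2 := (hq j hj).1
    rw [heq] at h1; omega
  have hpqne : ∀ i < k, ∀ j < k, p i ≠ q j := by
    intro i hi j hj heq
    have h1 := (hp i (by omega)).1
    have h2 := huq j hj
    have h3 := hvp i hi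
    have h4 := (hq j (by omega)).1
    rw [heq] at h1 h3; omega
  have hpwne : ∀ i < k, p i ≠ w := by
    intro i hi heq
    have h1 := (hp i (by omega)).1
    rw [heq, huw] at h1; omega
  have hqwne : ∀ i < k, q i ≠ w := by
    intro i hi heq
    have h1 := (hq i (by omega)).1
    rw [heq, hvw] at h1; omega
  -- adjacency restrictions
  have hApp : ∀ i ≤ k, ∀ j ≤ k, G.Adj (p i) (p j) → (j = i + 1 ∨ i = j + 1) := by
    intro i hi j hj hadj
    have h1 := (hp i hi).1
    have h2 := (hp j hj).1
    have e1 := dist_adj_le' G hG hadj u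
    have e2 := dist_adj_le' G hG hadj.symm u
    have : i ≠ j := fun h => hadj.ne (by rw [h])
    omega
  have hAqq : ∀ i ≤ k, ∀ j ≤ k, G.Adj (q i) (q j) → (j = i + 1 ∨ i = j + 1) := by
    intro i hi j hj hadj
    have h1 := (hq i hi).1
    have h2 := (hq j hj).1
    have e1 := dist_adj_le' G hG hadj v
    have e2 := dist_adj_le' G hG hadj.symm v
    have : i ≠ j := fun h => hadj.ne (by rw [h])
    omega
  have hApq : ∀ i < k, ∀ j < k, G.Adj (p i) (q j) → i = j := by
    intro i hi j hj hadj
    have h1 := (hp i (by omega)).1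
    have h2 := huq j hj
    have h3 := hvp i hi
    have h4 := (hq j (by omega)).1
    have e1 := dist_adj_le' G hG hadj u
    have e2 := dist_adj_le' G hG hadj.symm v
    omega
  have hApw : ∀ i, i + 2 ≤ k → ¬ G.Adj (p i) w := by
    intro i hi hadj
    have h1 := (hp i (by omega)).2
    have : G.dist (p i) w = 1 := dist_eq_one_iff_adj.2 hadj
    omega
  have hAqw : ∀ i, i + 2 ≤ k → ¬ G.Adj (q i) w := by
    intro i hi hadj
    have h1 := (hq i (by omega)).2
    have : G.dist (q i) w = 1 := dist_eq_one_iff_adj.2 hadj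
    omega
  -- rung structure
  set R : ℕ → Prop := fun i => G.Adj (p i) (q i) with hRdef
  have hR0 : R 0 := by rw [hRdef]; simp only [hp0, hq0]; exact huv
  set istar := Nat.findGreatest R (k - 1) with histardef
  have histar : R istar := Nat.findGreatest_spec (by omega : 0 ≤ k - 1) hR0
  have hile : istar ≤ k - 1 := Nat.findGreatest_le _
  have hmax : ∀ i, istar < i → i ≤ k - 1 → ¬ R i := fun i h1 h2 =>
    Nat.findGreatest_is_greatest h1 h2
  rcases lt_or_ge istar (k - 1) with hcaseA | hcaseB
  · -- Case A: top segment has length ≥ 2; odd induced cycle through w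
    set t := k - istar with htdef
    have ht2 : 2 ≤ t := by omega
    set n := 2 * t + 1 with hndef
    set f : ℕ → V := fun a => if a ≤ t then p (istar + a) else q (istar + (2 * t - a)) with hfdef
    have hfp : ∀ a, a ≤ t → f a = p (istar + a) := by
      intro a ha; simp only [hfdef]; rw [if_pos ha]
    have hfq : ∀ a, t < a → f a = q (istar + (2 * t - a)) := by
      intro a ha; simp only [hfdef]; rw [if_neg (by omega)]
    have hinj : ∀ a b, a < n → b < n → f a = f b → a = b := by
      intro a b ha hb heq
      rcases le_or_gt a t with h1 | h1 <;> rcases le_or_gt b t with h2 | h2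
      · rw [hfp a h1, hfp b h2] at heq
        have := hppne (istar + a) (by omega) (istar + b) (by omega) heq
        omega
      · exfalso
        rw [hfp a h1, hfq b h2] at heq
        rcases eq_or_lt_of_le h1 with h3 | h3
        · rw [h3, show istar + t = k by omega, hpk] at heq
          exact hqwne (istar + (2 * t - b)) (by omega) heq.symm
        · exact hpqne (istar + a) (by omega) (istar + (2 * t - b)) (by omega) heq
      · exfalso
        rw [hfq a h1, hfp b h2] at heq
        rcases eq_or_lt_of_le h2 with h3 | h3
        · rw [h3, show istar + t = k by omega, hpk] at heq
          exact hqwne (istar + (2 * t - a)) (by omega) heq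
        · exact hpqne (istar + b) (by omega) (istar + (2 * t - a)) (by omega) heq.symm
      · rw [hfq a h1, hfq b h2] at heq
        have := hqqne (istar + (2 * t - a)) (by omega) (istar + (2 * t - b)) (by omega) heq
        omega
    have keyM : ∀ a b, a ≤ t → t < b → b < n → G.Adj (f a) (f b) →
        (b = a + 1 ∨ (a = 0 ∧ b = n - 1)) := by
      intro a b h1 h2 hb hadj
      rw [hfq b h2] at hadj
      rcases eq_or_lt_of_le h1 with h3 | h3
      · rw [hfp a h1, h3, show istar + t = k by omega, hpk] at hadj
        by_contra hcon
        push_neg at hcon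
        exact hAqw (istar + (2 * t - b)) (by omega) hadj.symm
      · rw [hfp a h1] at hadj
        have hj := hApq (istar + a) (by omega) (istar + (2 * t - b)) (by omega) hadj
        rcases Nat.eq_zero_or_pos a with h4 | h4
        · right; omega
        · exfalso
          apply hmax (istar + a) (by omega) (by omega)
          show G.Adj (p (istar + a)) (q (istar + a))
          rw [← hj] at hadj
          exact hadj
    have key : ∀ a b, a < n → b < n → G.Adj (f a) (f b) →
        (b = a + 1 ∨ a = b + 1 ∨ (a = 0 ∧ b = n - 1) ∨ (b = 0 ∧ a = n - 1)) := by
      intro a b ha hb hadj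
      rcases le_or_gt a t with h1 | h1 <;> rcases le_or_gt b t with h2 | h2
      · rw [hfp a h1, hfp b h2] at hadj
        have := hApp (istar + a) (by omega) (istar + b) (by omega) hadj
        omega
      · have := keyM a b h1 h2 hb hadj
        omega
      · have := keyM b a h2 h1 ha hadj.symm
        omega
      · rw [hfq a h1, hfq b h2] at hadj
        have := hAqq (istar + (2 * t - a)) (by omega) (istar + (2 * t - b)) (by omega) hadj
        omega
    have bwd : ∀ a, a + 1 < n → G.Adj (f a) (f (a + 1)) := by
      intro a ha
      rcases lt_or_ge (a + 1) t with h1 | h1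
      · rw [hfp a (by omega), hfp (a + 1) (by omega), show istar + (a + 1) = (istar + a) + 1 by omega]
        exact hpadj (istar + a) (by omega)
      rcases eq_or_lt_of_le h1 with h2 | h2
      · rw [hfp a (by omega), hfp (a + 1) (by omega), show istar + (a+1) = k by omega, hpk,
          show istar + a = k - 1 by omega]
        have := hpadj (k - 1) (by omega)
        rwa [show k - 1 + 1 = k by omega, hpk] at this
      rcases eq_or_lt_of_le (show t + 1 ≤ a + 1 by omega) with h3 | h3
      · rw [hfp a (by omega), hfq (a + 1) (by omega), show istar + a = k by omega, hpk,
          show istar + (2 * t - (a + 1)) = k - 1 by omega]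
        have := hqadj (k - 1) (by omega)
        rw [show k - 1 + 1 = k by omega, hqk] at this
        exact this.symm
      · rw [hfq a (by omega), hfq (a + 1) (by omega),
          show istar + (2 * t - a) = (istar + (2 * t - (a + 1))) + 1 by omega]
        exact (hqadj (istar + (2 * t - (a + 1))) (by omega)).symm
    have bwdwrap : G.Adj (f 0) (f (n - 1)) := by
      rw [hfp 0 (by omega), hfq (n - 1) (by omega), show istar + 0 = istar by omega,
        show istar + (2 * t - (n - 1)) = istar by omega]
      exact histar
    have hadjIff : ∀ a b, a < n → b < n →
        (G.Adj (f a) (f b) ↔ (b = a + 1 ∨ a = b + 1 ∨ (a = 0 ∧ b = n - 1) ∨ (b = 0 ∧ a = n - 1))) := by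
      intro a b ha hb
      constructor
      · exact key a b ha hb
      · rintro (h | h | ⟨h1, h2⟩ | ⟨h1, h2⟩)
        · rw [h]; exact bwd a (by omega)
        · rw [h]; exact (bwd b (by omega)).symm
        · rw [h1, h2]; exact bwdwrap
        · rw [h1, h2]; exact bwdwrap.symm
    obtain ⟨e⟩ := cycle_embed G n (by omega) f hinj hadjIff
    exact (hH.2 n (by omega)).false e
  · -- Case B: istar = k - 1
    have hieq : istar = k - 1 := by omega
    have histar' : G.Adj (p (k - 1)) (q (k - 1)) := by rw [hieq] at histar; exact histar
    by_cases hR2 : G.Adj (p (k - 2)) (q (k - 2))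
    · -- house
      have Awp : G.Adj w (p (k - 1)) := by
        have := hpadj (k - 1) (by omega)
        rw [show k - 1 + 1 = k by omega, hpk] at this
        exact this.symm
      have Ap1p2 : G.Adj (p (k - 1)) (p (k - 2)) := by
        have := hpadj (k - 2) (by omega)
        rw [show k - 2 + 1 = k - 1 by omega] at this
        exact this.symm
      have Aq1q2 : G.Adj (q (k - 1)) (q (k - 2)) := by
        have := hqadj (k - 2) (by omega)
        rw [show k - 2 + 1 = k - 1 by omega] at this
        exact this.symm
      have Awq1 : G.Adj w (q (k - 1)) := by
        have := hqadj (k - 1) (by omega)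
        rw [show k - 1 + 1 = k by omega, hqk] at this
        exact this.symm
      have Nwp2 : ¬ G.Adj w (p (k - 2)) := fun h => hApw (k - 2) (by omega) h.symm
      have Nwq2 : ¬ G.Adj w (q (k - 2)) := fun h => hAqw (k - 2) (by omega) h.symm
      have Np1q2 : ¬ G.Adj (p (k - 1)) (q (k - 2)) := fun h => by
        have := hApq (k - 1) (by omega) (k - 2) (by omega) h; omega
      have Np2q1 : ¬ G.Adj (p (k - 2)) (q (k - 1)) := fun h => by
        have := hApq (k - 2) (by omega) (k - 1) (by omega) h; omega
      have D1 : w ≠ p (k - 1) := fun h => hpwne (k - 1) (by omega) h.symm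
      have D2 : w ≠ p (k - 2) := fun h => hpwne (k - 2) (by omega) h.symm
      have D3 : w ≠ q (k - 2) := fun h => hqwne (k - 2) (by omega) h.symm
      have D4 : w ≠ q (k - 1) := fun h => hqwne (k - 1) (by omega) h.symm
      have D5 : p (k - 1) ≠ p (k - 2) := fun h => by
        have := hppne (k - 1) (by omega) (k - 2) (by omega) h; omega
      have D6 : p (k - 1) ≠ q (k - 2) := hpqne (k - 1) (by omega) (k - 2) (by omega)
      have D7 : p (k - 1) ≠ q (k - 1) := hpqne (k - 1) (by omega) (k - 1) (by omega)
      have D8 : p (k - 2) ≠ q (k - 2) := hpqne (k - 2) (by omega) (k - 2) (by omega)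
      have D9 : p (k - 2) ≠ q (k - 1) := hpqne (k - 2) (by omega) (k - 1) (by omega)
      have D10 : q (k - 2) ≠ q (k - 1) := fun h => by
        have := hqqne (k - 2) (by omega) (k - 1) (by omega) h; omega
      obtain ⟨e⟩ := house_embed G w (p (k - 1)) (p (k - 2)) (q (k - 2)) (q (k - 1))
        Awp Ap1p2 hR2 Aq1q2.symm Awq1.symm histar'
        Nwp2 Nwq2 Np1q2 Np2q1 D2 D3 D6 D9
      exact hH.1.false e
    · -- even induced cycle
      set jstar := Nat.findGreatest R (k - 2) with hjdef
      have hjspec : R jstar := Nat.findGreatest_spec (by omega : 0 ≤ k - 2) hR0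
      have hjs' : G.Adj (p jstar) (q jstar) := hjspec
      have hjle : jstar ≤ k - 2 := Nat.findGreatest_le _
      have hjne : jstar ≠ k - 2 := by
        intro h
        rw [h] at hjs'
        exact hR2 hjs'
      have hjmax : ∀ i, jstar < i → i ≤ k - 2 → ¬ R i := fun i h1 h2 =>
        Nat.findGreatest_is_greatest h1 h2
      have hk3 : 3 ≤ k := by
        rcases Nat.lt_or_ge k 3 with h | h
        · exfalso
          have hk2 : k = 2 := by omega
          apply hR2
          rw [show k - 2 = 0 by omega, hp0, hq0]
          exact huv
        · exact h
      set r := (k - 1) - jstar with hrdef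
      have hr2 : 2 ≤ r := by omega
      set n := 2 * r + 2 with hndef
      set f : ℕ → V := fun a => if a ≤ r then p (jstar + a) else q (jstar + (2 * r + 1 - a)) with hfdef
      have hfp : ∀ a, a ≤ r → f a = p (jstar + a) := by
        intro a ha; simp only [hfdef]; rw [if_pos ha]
      have hfq : ∀ a, r < a → f a = q (jstar + (2 * r + 1 - a)) := by
        intro a ha; simp only [hfdef]; rw [if_neg (by omega)]
      have hinj : ∀ a b, a < n → b < n → f a = f b → a = b := by
        intro a b ha hb heq
        rcases le_or_gt a r with h1 | h1 <;> rcases le_or_gt b r with h2 | h2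
        · rw [hfp a h1, hfp b h2] at heq
          have := hppne (jstar + a) (by omega) (jstar + b) (by omega) heq
          omega
        · exfalso
          rw [hfp a h1, hfq b h2] at heq
          exact hpqne (jstar + a) (by omega) (jstar + (2 * r + 1 - b)) (by omega) heq
        · exfalso
          rw [hfq a h1, hfp b h2] at heq
          exact hpqne (jstar + b) (by omega) (jstar + (2 * r + 1 - a)) (by omega) heq.symm
        · rw [hfq a h1, hfq b h2] at heq
          have := hqqne (jstar + (2 * r + 1 - a)) (by omega) (jstar + (2 * r + 1 - b)) (by omega) heq
          omega
      have keyM : ∀ a b, a ≤ r → r < b → b < n → G.Adj (f a) (f b) →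
          (b = a + 1 ∨ (a = 0 ∧ b = n - 1)) := by
        intro a b h1 h2 hb hadj
        rw [hfp a h1, hfq b h2] at hadj
        have hj := hApq (jstar + a) (by omega) (jstar + (2 * r + 1 - b)) (by omega) hadj
        rcases Nat.eq_zero_or_pos a with h4 | h4
        · right; omega
        · rcases eq_or_lt_of_le h1 with h5 | h5
          · left; omega
          · exfalso
            apply hjmax (jstar + a) (by omega) (by omega)
            show G.Adj (p (jstar + a)) (q (jstar + a))
            rw [← hj] at hadj
            exact hadj
      have key : ∀ a b, a < n → b < n → G.Adj (f a) (f b) →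
          (b = a + 1 ∨ a = b + 1 ∨ (a = 0 ∧ b = n - 1) ∨ (b = 0 ∧ a = n - 1)) := by
        intro a b ha hb hadj
        rcases le_or_gt a r with h1 | h1 <;> rcases le_or_gt b r with h2 | h2
        · rw [hfp a h1, hfp b h2] at hadj
          have := hApp (jstar + a) (by omega) (jstar + b) (by omega) hadj
          omega
        · have := keyM a b h1 h2 hb hadj
          omega
        · have := keyM b a h2 h1 ha hadj.symm
          omega
        · rw [hfq a h1, hfq b h2] at hadj
          have := hAqq (jstar + (2 * r + 1 - a)) (by omega) (jstar + (2 * r + 1 - b)) (by omega) hadj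
          omega
      have bwd : ∀ a, a + 1 < n → G.Adj (f a) (f (a + 1)) := by
        intro a ha
        rcases lt_or_ge (a + 1) (r + 1) with h1 | h1
        · rw [hfp a (by omega), hfp (a + 1) (by omega),
            show jstar + (a + 1) = (jstar + a) + 1 by omega]
          exact hpadj (jstar + a) (by omega)
        rcases eq_or_lt_of_le h1 with h2 | h2
        · rw [hfp a (by omega), hfq (a + 1) (by omega),
            show jstar + a = k - 1 by omega, show jstar + (2 * r + 1 - (a + 1)) = k - 1 by omega]
          exact histar'
        · rw [hfq a (by omega), hfq (a + 1) (by omega),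
            show jstar + (2 * r + 1 - a) = (jstar + (2 * r + 1 - (a + 1))) + 1 by omega]
          exact (hqadj (jstar + (2 * r + 1 - (a + 1))) (by omega)).symm
      have bwdwrap : G.Adj (f 0) (f (n - 1)) := by
        rw [hfp 0 (by omega), hfq (n - 1) (by omega), show jstar + 0 = jstar by omega,
          show jstar + (2 * r + 1 - (n - 1)) = jstar by omega]
        exact hjs'
      have hadjIff : ∀ a b, a < n → b < n →
          (G.Adj (f a) (f b) ↔ (b = a + 1 ∨ a = b + 1 ∨ (a = 0 ∧ b = n - 1) ∨ (b = 0 ∧ a = n - 1))) := by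
        intro a b ha hb
        constructor
        · exact key a b ha hb
        · rintro (h | h | ⟨h1, h2⟩ | ⟨h1, h2⟩)
          · rw [h]; exact bwd a (by omega)
          · rw [h]; exact (bwd b (by omega)).symm
          · rw [h1, h2]; exact bwdwrap
          · rw [h1, h2]; exact bwdwrap.symm
      obtain ⟨e⟩ := cycle_embed G n (by omega) f hinj hadjIff
      exact (hH.2 n (by omega)).false e

lemma good_pair_diff (G : SimpleGraph V) (hG : G.Connected) {x y c : V} (hxy : G.dist x y = 2)
    (hxc : G.Adj x c) (hcy : G.Adj c y) (hl : line G x c = line G c y) (z : V) :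
    G.dist x z ≠ G.dist y z + 1 ∧ G.dist y z ≠ G.dist x z + 1 := by
  have hiff : (G.dist x z ≠ G.dist c z) ↔ (G.dist c z ≠ G.dist y z) := by
    rw [← mem_line_edge G hG hxc z, ← mem_line_edge G hG hcy z, hl]
  have e1 := dist_adj_le G hG hxc z
  have e2 := dist_adj_le G hG hxc.symm z
  have e3 := dist_adj_le G hG hcy z
  have e4 := dist_adj_le G hG hcy.symm z
  rcases eq_or_ne (G.dist x z) (G.dist c z) with h1 | h1 <;>
    rcases eq_or_ne (G.dist c z) (G.dist y z) with h2 | h2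
  · omega
  · exact (hiff.2 h2 h1).elim
  · exact (hiff.1 h1 h2).elim
  · omega

theorem stmt14 (G : SimpleGraph V) (hG : G.Connected) (hH : HHFree G)
    (hNoUniv : ∀ u v : V, u ≠ v → line G u v ≠ Set.univ) :
    ∀ u v x y : V, G.Adj u v → GoodPair G x y → line G u v ≠ line G x y := by
  intro u v x y huv hgp heq
  obtain ⟨hxy, c, hxc, hcy, hlc⟩ := hgp
  have hdiff := good_pair_diff G hG hxy hxc hcy hlc
  have hiff : ∀ z, (G.dist u z ≠ G.dist v z) ↔
      (G.dist x z = G.dist y z + 2 ∨ G.dist y z = G.dist x z + 2 ∨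
        (G.dist x z = 1 ∧ G.dist y z = 1)) := by
    intro z
    rw [← mem_line_edge G hG huv z, ← mem_line_two G hG hxy z, heq]
  obtain ⟨w, hw⟩ := (Set.ne_univ_iff_exists_notMem _).1 (hNoUniv u v huv.ne)
  have hw' : G.dist u w = G.dist v w := by
    by_contra h
    exact hw ((mem_line_edge G hG huv w).2 h)
  obtain ⟨t, ht1, ht2⟩ := exists_common_nbr G hG hH huv hw'
  have e1 : G.dist u t = 1 := dist_eq_one_iff_adj.2 ht1
  have e2 : G.dist v t = 1 := dist_eq_one_iff_adj.2 ht2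
  have htn : ¬ (G.dist x t = G.dist y t + 2 ∨ G.dist y t = G.dist x t + 2 ∨
      (G.dist x t = 1 ∧ G.dist y t = 1)) := by
    rw [← hiff t]; omega
  have tb1 : G.dist x t ≤ G.dist x y + G.dist y t := hG.dist_triangle
  have tb2 : G.dist y t ≤ G.dist y x + G.dist x t := hG.dist_triangle
  have hyx : G.dist y x = 2 := by
    rw [SimpleGraph.dist_comm (G := G) (u := y) (v := x)]; exact hxy
  have hmeq : G.dist x t = G.dist y t := by
    have := hdiff t
    omega
  have hm0 : G.dist x t ≠ 0 := by
    intro h0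
    have hx := hG.dist_eq_zero_iff.1 h0
    have hy := hG.dist_eq_zero_iff.1 (hmeq ▸ h0)
    rw [hx, hy] at hxy
    rw [SimpleGraph.dist_self] at hxy
    exact absurd hxy (by omega)
  have hm2 : 2 ≤ G.dist x t := by
    by_contra h
    exact htn (Or.inr (Or.inr ⟨by omega, by omega⟩))
  -- memberships of u, v, x, y
  have Fu := (hiff u).1 (by
    have : G.dist v u = 1 := dist_eq_one_iff_adj.2 huv.symm
    have : G.dist u u = 0 := by simp
    omega)
  have Fv := (hiff v).1 (by
    have : G.dist u v = 1 := dist_eq_one_iff_adj.2 huv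
    have : G.dist v v = 0 := by simp
    omega)
  have Fx : G.dist u x ≠ G.dist v x := (hiff x).2 (by
    have : G.dist x x = 0 := by simp
    omega)
  have Fy : G.dist u y ≠ G.dist v y := (hiff y).2 (by
    have : G.dist y y = 0 := by simp
    omega)
  -- conversions
  have cxu : G.dist u x = G.dist x u := SimpleGraph.dist_comm
  have cyu : G.dist u y = G.dist y u := SimpleGraph.dist_comm
  have cxv : G.dist v x = G.dist x v := SimpleGraph.dist_comm
  have cyv : G.dist v y = G.dist y v := SimpleGraph.dist_comm
  -- bounds via edges u-t, v-t, u-v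
  have but1 : G.dist x u ≤ G.dist x t + 1 := dist_adj_le' G hG ht1.symm x
  have but2 : G.dist x t ≤ G.dist x u + 1 := dist_adj_le' G hG ht1 x
  have byt1 : G.dist y u ≤ G.dist y t + 1 := dist_adj_le' G hG ht1.symm y
  have byt2 : G.dist y t ≤ G.dist y u + 1 := dist_adj_le' G hG ht1 y
  have bvt1 : G.dist x v ≤ G.dist x t + 1 := dist_adj_le' G hG ht2.symm x
  have bvt2 : G.dist x t ≤ G.dist x v + 1 := dist_adj_le' G hG ht2 x
  have bvt3 : G.dist y v ≤ G.dist y t + 1 := dist_adj_le' G hG ht2.symm y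
  have bvt4 : G.dist y t ≤ G.dist y v + 1 := dist_adj_le' G hG ht2 y
  have buv1 : G.dist x v ≤ G.dist x u + 1 := dist_adj_le' G hG huv x
  have buv2 : G.dist x u ≤ G.dist x v + 1 := dist_adj_le' G hG huv.symm x
  have buv3 : G.dist y v ≤ G.dist y u + 1 := dist_adj_le' G hG huv y
  have buv4 : G.dist y u ≤ G.dist y v + 1 := dist_adj_le' G hG huv.symm y
  rcases Fu with (h | h | ⟨h, h'⟩) <;> rcases Fv with (g | g | ⟨g, g'⟩) <;> omega
end

section
/- Let G be a connected graph and x_0, x_1, x_2, x_3 a C_4-module of G (in cyclic order). If G − x_0 has a universal line generated by two vertices at distance at most 2, or has at least |V(G)| − 1 distinct lines, then G has a universal line generated by two vertices at distance at most 2, or at least |V(G)| distinct lines. -/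
open SimpleGraph

variable {V : Type*}

def twinHom (G : SimpleGraph V) [DecidableEq V] (x y : V)
    (h : ∀ w, G.Adj x w ↔ G.Adj y w) : G →g G where
  toFun w := if w = x then y else w
  map_rel' := by
    intro a b hab
    split_ifs with ha hb hb
    · exact absurd (ha ▸ hb ▸ hab) G.irrefl
    · exact (h b).mp (ha ▸ hab)
    · exact ((h a).mp (hb ▸ hab).symm).symm
    · exact hab

@[simp] lemma twinHom_apply (G : SimpleGraph V) [DecidableEq V] (x y : V)
    (h : ∀ w, G.Adj x w ↔ G.Adj y w) (w : V) :
    (twinHom G x y h) w = if w = x then y else w := rfl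

lemma twin_dist_le (G : SimpleGraph V) (hG : G.Connected) (x y : V)
    (h : ∀ w, G.Adj x w ↔ G.Adj y w) (z : V) (hz : z ≠ x) :
    G.dist y z ≤ G.dist x z := by
  classical
  obtain ⟨p, hp⟩ := hG.exists_walk_length_eq_dist x z
  have hle := dist_le ((p.map (twinHom G x y h)).copy
    (show (twinHom G x y h) x = y by simp)
    (show (twinHom G x y h) z = z by simp [hz]))
  rwa [Walk.length_copy, Walk.length_map, hp] at hle

lemma twin_dist (G : SimpleGraph V) (hG : G.Connected) (x y : V)
    (h : ∀ w, G.Adj x w ↔ G.Adj y w) (z : V) (hzx : z ≠ x) (hzy : z ≠ y) :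
    G.dist x z = G.dist y z :=
  le_antisymm (twin_dist_le G hG y x (fun w => (h w).symm) z hzy)
    (twin_dist_le G hG x y h z hzx)

def twinHom' (G : SimpleGraph V) [DecidableEq V] (x y : V) (hxy : x ≠ y)
    (h : ∀ w, G.Adj x w ↔ G.Adj y w) : G →g G.induce {w : V | w ≠ x} where
  toFun w := if hw : w = x then ⟨y, hxy.symm⟩ else ⟨w, hw⟩
  map_rel' := by
    intro a b hab
    split_ifs with ha hb hb
    · exact absurd (ha ▸ hb ▸ hab) G.irrefl
    · exact (h b).mp (ha ▸ hab)
    · exact ((h a).mp (hb ▸ hab).symm).symm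
    · exact hab

@[simp] lemma twinHom'_apply (G : SimpleGraph V) [DecidableEq V] (x y : V) (hxy : x ≠ y)
    (h : ∀ w, G.Adj x w ↔ G.Adj y w) (w : V) :
    (twinHom' G x y hxy h) w = if hw : w = x then ⟨y, hxy.symm⟩ else ⟨w, hw⟩ := rfl

def outHom (G : SimpleGraph V) (s : Set V) : G.induce s →g G where
  toFun w := w.val
  map_rel' := fun hab => hab

lemma induced_twin_dist (G : SimpleGraph V) (hG : G.Connected) (x y : V) (hxy : x ≠ y)
    (h : ∀ w, G.Adj x w ↔ G.Adj y w)
    (hconn : (G.induce {w : V | w ≠ x}).Connected)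
    (u v : {w : V // w ≠ x}) :
    (G.induce {w : V | w ≠ x}).dist u v = G.dist u.val v.val := by
  classical
  apply le_antisymm
  · obtain ⟨p, hp⟩ := hG.exists_walk_length_eq_dist u.val v.val
    have hle := dist_le ((p.map (twinHom' G x y hxy h)).copy
      (show (twinHom' G x y hxy h) u.val = u by
        simp only [twinHom'_apply]; rw [dif_neg u.prop]; rfl)
      (show (twinHom' G x y hxy h) v.val = v by
        simp only [twinHom'_apply]; rw [dif_neg v.prop]; rfl))
    rwa [Walk.length_copy, Walk.length_map, hp] at hle
  · obtain ⟨p, hp⟩ := hconn.exists_walk_length_eq_dist u v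
    have hle := dist_le (p.map (outHom G {w : V | w ≠ x}))
    rwa [Walk.length_map, hp] at hle

lemma left_mem_line (G : SimpleGraph V) (x y : V) : x ∈ line G x y := by
  simp only [line, interval, Set.mem_setOf_eq]
  left; simp [SimpleGraph.dist_self]

lemma right_mem_line (G : SimpleGraph V) (x y : V) : y ∈ line G x y := by
  simp only [line, interval, Set.mem_setOf_eq]
  left; simp [SimpleGraph.dist_self]

lemma dcomm (G : SimpleGraph V) (a b : V) : G.dist a b = G.dist b a :=
  SimpleGraph.dist_comm

lemma interval_comm (G : SimpleGraph V) (x y : V) : interval G x y = interval G y x := by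
  ext z
  simp only [interval, Set.mem_setOf_eq]
  constructor <;> intro h
  · rw [dcomm G y x, dcomm G y z, dcomm G z x]; omega
  · rw [dcomm G x y, dcomm G x z, dcomm G z y]; omega

lemma line_comm_subset (G : SimpleGraph V) (x y : V) : line G x y ⊆ line G y x := by
  rintro z (h | h | h)
  · exact Or.inl (by rwa [interval_comm G y x])
  · exact Or.inr (Or.inr (by rwa [interval_comm G y z]))
  · exact Or.inr (Or.inl (by rwa [interval_comm G z x]))

lemma line_comm (G : SimpleGraph V) (x y : V) : line G x y = line G y x :=
  Set.Subset.antisymm (line_comm_subset G x y) (line_comm_subset G y x)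

theorem stmt15 [Fintype V] (G : SimpleGraph V) (hG : G.Connected)
    (x0 x1 x2 x3 : V) (hnd : ([x0, x1, x2, x3] : List V).Nodup)
    (h01 : G.Adj x0 x1) (h12 : G.Adj x1 x2) (h23 : G.Adj x2 x3)
    (h30 : G.Adj x3 x0) (h02 : ¬ G.Adj x0 x2) (h13 : ¬ G.Adj x1 x3)
    (hmod : ∀ z : V, z ∉ ({x0, x1, x2, x3} : Set V) →
      ((G.Adj z x0 ∧ G.Adj z x1 ∧ G.Adj z x2 ∧ G.Adj z x3) ∨
       (¬ G.Adj z x0 ∧ ¬ G.Adj z x1 ∧ ¬ G.Adj z x2 ∧ ¬ G.Adj z x3)))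
    (hconn : (G.induce {x : V | x ≠ x0}).Connected)
    (hyp : (∃ u v : {x : V // x ≠ x0}, u ≠ v ∧
            (G.induce {x : V | x ≠ x0}).dist u v ≤ 2 ∧
            line (G.induce {x : V | x ≠ x0}) u v = Set.univ) ∨
           Fintype.card V - 1 ≤ (lineSet (G.induce {x : V | x ≠ x0})).ncard) :
    (∃ u v : V, u ≠ v ∧ G.dist u v ≤ 2 ∧ line G u v = Set.univ) ∨
      Fintype.card V ≤ (lineSet G).ncard := by
  classical
  simp only [List.nodup_cons, List.mem_cons, List.not_mem_nil, or_false, not_or,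
    List.mem_singleton, List.nodup_nil, and_true] at hnd
  obtain ⟨⟨hne01, hne02, hne03⟩, ⟨hne12, hne13⟩, hne23, -⟩ := hnd
  -- x0 and x2 are false twins
  have twin : ∀ w, G.Adj x0 w ↔ G.Adj x2 w := by
    intro w
    rcases eq_or_ne w x0 with rfl | hw0
    · exact iff_of_false (G.irrefl) (fun hh => h02 hh.symm)
    rcases eq_or_ne w x1 with rfl | hw1
    · exact iff_of_true h01 h12.symm
    rcases eq_or_ne w x2 with rfl | hw2
    · exact iff_of_false h02 (G.irrefl)
    rcases eq_or_ne w x3 with rfl | hw3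
    · exact iff_of_true h30.symm h23
    rcases hmod w (by simp [hw0, hw1, hw2, hw3]) with ⟨ha0, _, ha2, _⟩ | ⟨hn0, _, hn2, _⟩
    · exact iff_of_true ha0.symm ha2.symm
    · exact iff_of_false (fun hh => hn0 hh.symm) (fun hh => hn2 hh.symm)
  have dtwin : ∀ z, z ≠ x0 → z ≠ x2 → G.dist x0 z = G.dist x2 z :=
    fun z hz0 hz2 => twin_dist G hG x0 x2 twin z hz0 hz2
  have hiso : ∀ u v : {x : V // x ≠ x0},
      (G.induce {x : V | x ≠ x0}).dist u v = G.dist u.val v.val :=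
    fun u v => induced_twin_dist G hG x0 x2 hne02 twin hconn u v
  have hline : ∀ u v z : {x : V // x ≠ x0},
      z ∈ line (G.induce {x : V | x ≠ x0}) u v ↔ (z : V) ∈ line G u.val v.val := by
    intro u v z
    simp only [line, interval, Set.mem_setOf_eq, hiso]
    exact Iff.rfl
  have hd02 : G.dist x0 x2 = 2 := by
    have hle : G.dist x0 x2 ≤ 2 := by
      have := dist_le (Walk.cons h01 (Walk.cons h12 Walk.nil))
      simpa using this
    have hne1 : G.dist x0 x2 ≠ 1 := fun hh => h02 (dist_eq_one_iff_adj.mp hh)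
    have hne0 : G.dist x0 x2 ≠ 0 := fun hh => hne02 (hG.dist_eq_zero_iff.mp hh)
    omega
  have hswap : ∀ u v : V, u ≠ x0 → u ≠ x2 → v ≠ x0 → v ≠ x2 →
      (x0 ∈ line G u v ↔ x2 ∈ line G u v) := by
    intro u v hu0 hu2 hv0 hv2
    simp only [line, interval, Set.mem_setOf_eq]
    rw [show G.dist u x0 = G.dist u x2 by
          rw [dcomm G u x0, dcomm G u x2]; exact dtwin u hu0 hu2,
        show G.dist x0 v = G.dist x2 v from dtwin v hv0 hv2,
        show G.dist v x0 = G.dist v x2 by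
          rw [dcomm G v x0, dcomm G v x2]; exact dtwin v hv0 hv2,
        show G.dist x0 u = G.dist x2 u from dtwin u hu0 hu2]
  rcases hyp with ⟨u, v, huv, hd, hl⟩ | hcard
  · -- universal line case
    left
    have key : ∀ u v : {x : V // x ≠ x0}, u ≠ v →
        (G.induce {x : V | x ≠ x0}).dist u v ≤ 2 →
        line (G.induce {x : V | x ≠ x0}) u v = Set.univ → (u : V) ≠ x2 →
        ∃ a b : V, a ≠ b ∧ G.dist a b ≤ 2 ∧ line G a b = Set.univ := by
      intro u v huv hd hl hu2
      have hvne : (u : V) ≠ (v : V) := fun hh => huv (Subtype.ext hh)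
      have hu0 : (u : V) ≠ x0 := u.prop
      have hv0 : (v : V) ≠ x0 := v.prop
      by_cases hv2 : (v : V) = x2
      · -- second endpoint is x2
        have hdist0 : (G.induce {x : V | x ≠ x0}).dist u v ≠ 0 :=
          fun hh => huv (hconn.dist_eq_zero_iff.mp hh)
        have hiuv := hiso u v
        rw [hv2] at hiuv
        have hdG : G.dist u.val x2 = 1 ∨ G.dist u.val x2 = 2 := by omega
        rcases hdG with h1 | h2
        · -- adjacent
          refine ⟨u.val, x2, fun hh => hvne (hh.trans hv2.symm), by omega, ?_⟩
          ext z
          simp only [Set.mem_univ, iff_true]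
          by_cases hz0 : z = x0
          · rw [hz0]
            have e1 : G.dist x0 u.val = G.dist x2 u.val := dtwin u.val hu0 hu2
            have e2 : G.dist x2 u.val = G.dist u.val x2 := dcomm G _ _
            refine Or.inr (Or.inl ?_)
            simp only [interval, Set.mem_setOf_eq]
            omega
          · have hm := (hline u v ⟨z, hz0⟩).mp (by rw [hl]; trivial)
            rwa [hv2] at hm
        · -- distance 2 : contradiction
          exfalso
          have hnadj : ¬ G.Adj u.val x2 := fun hh => by
            have := dist_eq_one_iff_adj.mpr hh; omega
          have hu1 : u.val ≠ x1 := fun hh => hnadj (hh ▸ h12)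
          have hu3 : u.val ≠ x3 := fun hh => hnadj (hh ▸ h23.symm)
          have hbadu : ¬G.Adj (↑u) x0 ∧ ¬G.Adj (↑u) x1 ∧ ¬G.Adj (↑u) x2 ∧ ¬G.Adj (↑u) x3 := by
            rcases hmod u.val (by simp [hu0, hu1, hu2, hu3]) with hgood | hbad
            · exact absurd hgood.2.2.1 hnadj
            · exact hbad
          obtain ⟨hn0, hn1, hn2, hn3⟩ := hbadu
          have x1mem : x1 ∈ line G u.val x2 := by
            have hm := (hline u v ⟨x1, Ne.symm hne01⟩).mp (by rw [hl]; trivial)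
            rwa [hv2] at hm
          simp only [line, interval, Set.mem_setOf_eq] at x1mem
          have e12 : G.dist x1 x2 = 1 := dist_eq_one_iff_adj.mpr h12
          have e21 : G.dist x2 x1 = 1 := by rw [dcomm G x2 x1]; exact e12
          have hnux1 : G.dist u.val x1 ≠ 1 := fun hh => hn1 (dist_eq_one_iff_adj.mp hh)
          have hd3 : G.dist u.val x1 = 3 := by
            rcases x1mem with h | h | h <;> omega
          obtain ⟨p, hp⟩ := hG.exists_walk_length_eq_dist u.val x2
          rw [h2] at hp
          cases p with
          | nil => simp at hp
          | @cons _ c _ hadj q =>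
            cases q with
            | nil => simp at hp
            | @cons _ c' _ hadj2 r =>
              cases r with
              | @cons _ c'' _ h3 s =>
                simp only [Walk.length_cons] at hp; omega
              | nil =>
                -- hadj : G.Adj u.val c, hadj2 : G.Adj c x2
                have hc0 : c ≠ x0 := fun hh => hn0 (hh ▸ hadj)
                have hc1 : c ≠ x1 := fun hh => hn1 (hh ▸ hadj)
                have hc3 : c ≠ x3 := fun hh => hn3 (hh ▸ hadj)
                have hc2 : c ≠ x2 := fun hh => G.irrefl (hh ▸ hadj2)
                rcases hmod c (by simp [hc0, hc1, hc2, hc3]) with ⟨_, hcx1, _, _⟩ | ⟨_, _, hno2, _⟩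
                · have hle := dist_le (Walk.cons hadj (Walk.cons hcx1 Walk.nil))
                  simp only [Walk.length_cons, Walk.length_nil] at hle
                  omega
                · exact hno2 hadj2
      · -- generic case : both endpoints avoid x0, x2
        refine ⟨u.val, v.val, hvne, by rw [← hiso u v]; exact hd, ?_⟩
        ext z
        simp only [Set.mem_univ, iff_true]
        by_cases hz0 : z = x0
        · rw [hz0]
          have hx2m : x2 ∈ line G u.val v.val :=
            (hline u v ⟨x2, Ne.symm hne02⟩).mp (by rw [hl]; trivial)
          exact (hswap u.val v.val hu0 hu2 hv0 hv2).mpr hx2m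
        · exact (hline u v ⟨z, hz0⟩).mp (by rw [hl]; trivial)
    by_cases hu2 : (u : V) = x2
    · have hv2 : (v : V) ≠ x2 := fun hh => huv (Subtype.ext (hu2.trans hh.symm))
      exact key v u huv.symm (by rwa [SimpleGraph.dist_comm] at hd)
        (by rwa [line_comm] at hl) hv2
    · exact key u v huv hd hl hu2
  · -- counting case
    by_cases huniv : line G x0 x2 = Set.univ
    · exact Or.inl ⟨x0, x2, hne02, by omega, huniv⟩
    right
    obtain ⟨z0, hz0⟩ := (Set.ne_univ_iff_exists_notMem _).mp huniv
    have hz00 : z0 ≠ x0 := fun hh => hz0 (hh ▸ left_mem_line G x0 x2)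
    have hz02 : z0 ≠ x2 := fun hh => hz0 (hh ▸ right_mem_line G x0 x2)
    have etw : G.dist x0 z0 = G.dist x2 z0 := dtwin z0 hz00 hz02
    have ecm : G.dist x2 z0 = G.dist z0 x2 := dcomm G _ _
    have hdz : 2 ≤ G.dist x0 z0 := by
      by_contra hlt
      push_neg at hlt
      have hne0' : G.dist x0 z0 ≠ 0 := fun hh => hz00 (hG.dist_eq_zero_iff.mp hh).symm
      apply hz0
      simp only [line, interval, Set.mem_setOf_eq]
      left
      omega
    have hx2M : x2 ∉ line G x0 z0 := by
      intro hmem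
      simp only [line, interval, Set.mem_setOf_eq] at hmem
      have e20 : G.dist x2 x0 = G.dist x0 x2 := dcomm G _ _
      rcases hmem with h | h | h <;> omega
    have hx0M : x0 ∈ line G x0 z0 := left_mem_line G x0 z0
    set S : Set (Set V) := {ℓ | ∃ a b : V, a ≠ x0 ∧ b ≠ x0 ∧ a ≠ b ∧ line G a b = ℓ} with hS
    have hMS : line G x0 z0 ∉ S := by
      rintro ⟨a, b, ha, hb, hab, heq⟩
      have hx0' : x0 ∈ line G a b := by rw [heq]; exact hx0M
      by_cases ha2 : a = x2
      · exact hx2M (by rw [← heq]; exact ha2 ▸ left_mem_line G a b)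
      by_cases hb2 : b = x2
      · exact hx2M (by rw [← heq]; exact hb2 ▸ right_mem_line G a b)
      · exact hx2M (by rw [← heq]; exact (hswap a b ha ha2 hb hb2).mp hx0')
    have hrestrict : ∀ a b : {x : V // x ≠ x0},
        line (G.induce {x : V | x ≠ x0}) a b = Subtype.val ⁻¹' line G a.val b.val := by
      intro a b; ext z; exact hline a b z
    have hcardS : (lineSet (G.induce {x : V | x ≠ x0})).ncard ≤ S.ncard := by
      apply Set.ncard_le_ncard_of_injOn
        (fun ℓ' => if h : ℓ' ∈ lineSet (G.induce {x : V | x ≠ x0}) then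
          line G h.choose.val h.choose_spec.choose.val else ∅)
      · intro ℓ' hℓ
        rw [dif_pos hℓ]
        obtain ⟨hne, _⟩ := hℓ.choose_spec.choose_spec
        exact ⟨_, _, hℓ.choose.prop, hℓ.choose_spec.choose.prop,
          fun hh => hne (Subtype.ext hh), rfl⟩
      · intro ℓ1 h1 ℓ2 h2 heq
        dsimp only at heq
        rw [dif_pos h1, dif_pos h2] at heq
        have e1 : ℓ1 = Subtype.val ⁻¹' line G h1.choose.val h1.choose_spec.choose.val := by
          rw [← hrestrict]; exact h1.choose_spec.choose_spec.2.symm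
        have e2 : ℓ2 = Subtype.val ⁻¹' line G h2.choose.val h2.choose_spec.choose.val := by
          rw [← hrestrict]; exact h2.choose_spec.choose_spec.2.symm
        rw [e1, e2, heq]
    have hsub : insert (line G x0 z0) S ⊆ lineSet G := by
      intro ℓ hℓ
      rcases hℓ with rfl | ⟨a, b, _, _, hab, heq⟩
      · exact ⟨x0, z0, fun hh => hz00 hh.symm, rfl⟩
      · exact ⟨a, b, hab, heq⟩
    have h1 : (insert (line G x0 z0) S).ncard = S.ncard + 1 :=
      Set.ncard_insert_of_notMem hMS S.toFinite
    have h2 : (insert (line G x0 z0) S).ncard ≤ (lineSet G).ncard :=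
      Set.ncard_le_ncard hsub (lineSet G).toFinite
    omega
end
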